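/- arXiv:2602.03428 — 6 statements merged into one kernel-verified Lean document; each statement's English description precedes it below -/
import Mathlib

section
/- For every α ∈ (0,1], the cubic polynomial p_α(x) = c₀(α) + c₁(α)·x + c₂(α)·x² + c₃(α)·x³ has three distinct, strictly positive real roots; that is, there exist real numbers x₁, x₂, x₃ with 0 < x₁ < x₂ < x₃ such that p_α(x₁) = p_α(x₂) = p_α(x₃) = 0. -/
noncomputable section

/-- Coefficient `c₀(α) = 1024000·(2α² + α + 2)`. -/
def c0 (α : ℝ) : ℝ := 1024000 * (2 * α ^ 2 + α + 2)

/-- Coefficient `c₁(α) = −1600·(α³·(60 − 19α) + 47α² + 136α + 36)`. -/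
def c1 (α : ℝ) : ℝ := -1600 * (α ^ 3 * (60 - 19 * α) + 47 * α ^ 2 + 136 * α + 36)

/-- Coefficient `c₂(α) = 20·(α³·(222 − 35α³) + (16 − 15α⁵) + 12α⁴ + 188α² + 112α)`. -/
def c2 (α : ℝ) : ℝ :=
  20 * (α ^ 3 * (222 - 35 * α ^ 3) + (16 - 15 * α ^ 5) + 12 * α ^ 4 + 188 * α ^ 2 + 112 * α)

/-- Coefficient `c₃(α) = −(α⁴·(26 − 21α) + α²·(41 − 31α) + 52α + 8)·α²`. -/
def c3 (α : ℝ) : ℝ := -((α ^ 4 * (26 - 21 * α) + α ^ 2 * (41 - 31 * α) + 52 * α + 8) * α ^ 2)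

/-- The cubic polynomial `p_α(x) = c₀(α) + c₁(α)·x + c₂(α)·x² + c₃(α)·x³`. -/
def p (α x : ℝ) : ℝ := c0 α + c1 α * x + c2 α * x ^ 2 + c3 α * x ^ 3

/-- For every `α ∈ (0,1]`, the cubic `p_α` has three distinct strictly
positive real roots. -/
theorem stmt0 (α : ℝ) (hα0 : 0 < α) (hα1 : α ≤ 1) :
    ∃ x₁ x₂ x₃ : ℝ, 0 < x₁ ∧ x₁ < x₂ ∧ x₂ < x₃ ∧
      p α x₁ = 0 ∧ p α x₂ = 0 ∧ p α x₃ = 0 := by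
  have hαne : α ≠ 0 := ne_of_gt hα0
  have h1α : (0:ℝ) ≤ 1 - α := by linarith
  have hcont : Continuous (p α) := by
    unfold p; continuity
  -- p α 0 > 0
  have hP0 : 0 < p α 0 := by
    unfold p c0 c1 c2 c3; nlinarith [sq_nonneg α]
  -- p α 51 < 0
  have hq1 : 0 < 57280 + 4247360*α - 6931352*α^2 + 245412*α^3 + 3264051*α^4
      - 3331881*α^5 + 5269626*α^6 - 2785671*α^7 := by
    nlinarith [mul_nonneg h1α hα0.le, sq_nonneg (1-α), sq_nonneg (α*(1-α)),
      mul_nonneg (mul_nonneg h1α hα0.le) (sq_nonneg (1-α)),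
      mul_nonneg (mul_nonneg h1α hα0.le) (sq_nonneg α),
      mul_nonneg (sq_nonneg (α*(1-α))) hα0.le,
      mul_nonneg (sq_nonneg (α*(1-α))) h1α,
      mul_nonneg (mul_nonneg hα0.le hα0.le) hα0.le,
      sq_nonneg (α^2*(1-α)), mul_nonneg (sq_nonneg (α^2*(1-α))) h1α]
  have hP51 : p α 51 < 0 := by
    have he : p α 51 = -(57280 + 4247360*α - 6931352*α^2 + 245412*α^3 + 3264051*α^4
        - 3331881*α^5 + 5269626*α^6 - 2785671*α^7) := by
      unfold p c0 c1 c2 c3; ring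
    rw [he]; linarith
  -- p α (56/α) > 0
  have hq2 : 0 < 1003520 + 2394112*α - 7478272*α^2 + 3536384*α^3 + 2868736*α^4
      - 3804416*α^5 + 1492736*α^6 := by
    nlinarith [sq_nonneg α, sq_nonneg (1-α), sq_nonneg (α^2-α), sq_nonneg (α^3-α^2),
      sq_nonneg (α^3-α)]
  have hPb : 0 < p α (56/α) := by
    have key : α^3 * p α (56/α) = α * (1003520 + 2394112*α - 7478272*α^2 + 3536384*α^3
        + 2868736*α^4 - 3804416*α^5 + 1492736*α^6) := by
      unfold p c0 c1 c2 c3; field_simp; ring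
    have h3 : 0 < α^3 := by positivity
    nlinarith [mul_pos hα0 hq2]
  -- p α (1000/α^2) < 0
  have hq3 : (-7680000000 - 49760000000*α - 37297600000*α^2 + 35222400000*α^3
      - 25833152000*α^4 + 20605024000*α^5 - 667552000*α^6 : ℝ) < 0 := by
    nlinarith [sq_nonneg α, sq_nonneg (1-α), sq_nonneg (α^2-α), sq_nonneg (α^3-α^2)]
  have hPc : p α (1000/α^2) < 0 := by
    have key : α^6 * p α (1000/α^2) = α^2 * (-7680000000 - 49760000000*α - 37297600000*α^2
        + 35222400000*α^3 - 25833152000*α^4 + 20605024000*α^5 - 667552000*α^6) := by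
      unfold p c0 c1 c2 c3; field_simp; ring
    have h6 : 0 < α^6 := by positivity
    have h2 : 0 < α^2 := by positivity
    nlinarith [mul_neg_of_pos_of_neg h2 hq3]
  -- ordering of the test points
  have hab : (51:ℝ) < 56/α := by
    rw [lt_div_iff₀ hα0]; nlinarith
  have hbc : 56/α < 1000/α^2 := by
    rw [div_lt_div_iff₀ hα0 (by positivity)]; nlinarith
  -- roots by the intermediate value theorem
  obtain ⟨x₁, hx₁mem, hx₁⟩ := intermediate_value_Ioo' (by norm_num : (0:ℝ) ≤ 51)
    hcont.continuousOn (Set.mem_Ioo.2 ⟨hP51, hP0⟩)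
  obtain ⟨x₂, hx₂mem, hx₂⟩ := intermediate_value_Ioo (le_of_lt hab)
    hcont.continuousOn (Set.mem_Ioo.2 ⟨hP51, hPb⟩)
  obtain ⟨x₃, hx₃mem, hx₃⟩ := intermediate_value_Ioo' (le_of_lt hbc)
    hcont.continuousOn (Set.mem_Ioo.2 ⟨hPc, hPb⟩)
  exact ⟨x₁, x₂, x₃, hx₁mem.1, lt_trans hx₁mem.2 hx₂mem.1,
    lt_trans hx₂mem.2 hx₃mem.1, hx₁, hx₂, hx₃⟩
end
end

section
/- For every α ∈ (0,1] and every real number x ≤ 0, the value p_α(x) is strictly positive; in particular p_α has no root in (−∞, 0]. -/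
noncomputable section

/-- For `α ∈ (0,1]` and `x ≤ 0`, `p_α(x) > 0`; in particular `p_α`
has no root in `(−∞, 0]`. -/
theorem stmt2 (α : ℝ) (hα0 : 0 < α) (hα1 : α ≤ 1) (x : ℝ) (hx : x ≤ 0) :
    0 < p α x := by
  unfold p c0 c1 c2 c3
  have hα3 := pow_le_one₀ (le_of_lt hα0) hα1 (n := 3)
  have hα5 := pow_le_one₀ (le_of_lt hα0) hα1 (n := 5)
  have h1 : (0:ℝ) < 1024000 * (2 * α ^ 2 + α + 2) := by positivity
  have h2 : 0 ≤ -1600 * (α ^ 3 * (60 - 19 * α) + 47 * α ^ 2 + 136 * α + 36) * x := by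
    have hc : 0 ≤ α ^ 3 * (60 - 19 * α) + 47 * α ^ 2 + 136 * α + 36 := by
      nlinarith [pow_pos hα0 3, sq_nonneg α]
    nlinarith [mul_nonneg hc (neg_nonneg.mpr hx)]
  have h3 : 0 ≤ 20 * (α ^ 3 * (222 - 35 * α ^ 3) + (16 - 15 * α ^ 5) + 12 * α ^ 4 + 188 * α ^ 2 + 112 * α) * x ^ 2 := by
    have hc : 0 ≤ α ^ 3 * (222 - 35 * α ^ 3) + (16 - 15 * α ^ 5) + 12 * α ^ 4 + 188 * α ^ 2 + 112 * α := by
      nlinarith [pow_pos hα0 3, pow_pos hα0 4, pow_pos hα0 5, sq_nonneg α]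
    nlinarith [mul_nonneg hc (sq_nonneg x)]
  have h4 : 0 ≤ -((α ^ 4 * (26 - 21 * α) + α ^ 2 * (41 - 31 * α) + 52 * α + 8) * α ^ 2) * x ^ 3 := by
    have hx3 : x ^ 3 ≤ 0 := by nlinarith [sq_nonneg x]
    have hc : 0 ≤ (α ^ 4 * (26 - 21 * α) + α ^ 2 * (41 - 31 * α) + 52 * α + 8) * α ^ 2 := by
      have h5 : 21 * α ≤ 21 := by linarith
      have h6 : 31 * α ≤ 31 := by linarith
      nlinarith [pow_pos hα0 4, pow_pos hα0 2, sq_nonneg α]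
    nlinarith [mul_nonneg hc (neg_nonneg.mpr hx3)]
  linarith
end
end

section
/- For every b ∈ [0, 1/2], the polynomial w(b) = 13375·b⁵·(1 − b) + 2625·b⁷ + b²·(14875·b³ − 29495·b² + 10905·b + 567) + 500·b + 55 satisfies w(b) ≥ 55. -/
/-- For every `b ∈ [0, 1/2]`,
`w(b) = 13375·b⁵·(1 − b) + 2625·b⁷ + b²·(14875·b³ − 29495·b² + 10905·b + 567) + 500·b + 55 ≥ 55`. -/
theorem stmt4 (b : ℝ) (hb0 : 0 ≤ b) (hb1 : b ≤ 1 / 2) :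
    55 ≤ 13375 * b ^ 5 * (1 - b) + 2625 * b ^ 7 +
        b ^ 2 * (14875 * b ^ 3 - 29495 * b ^ 2 + 10905 * b + 567) + 500 * b + 55 := by
  nlinarith [sq_nonneg b, sq_nonneg (1-2*b), mul_nonneg hb0 hb0, sq_nonneg (b*(1-2*b)), sq_nonneg (b^2*(1-2*b)), mul_nonneg (mul_nonneg hb0 hb0) hb0, pow_nonneg hb0 3, pow_nonneg hb0 5, mul_nonneg (pow_nonneg hb0 3) (sq_nonneg (1-2*b)), mul_nonneg (pow_nonneg hb0 5) (sq_nonneg (1-2*b))]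
end

section
/- For every α ∈ (0, 1], the value of the cubic polynomial p_α at x = 50 is strictly negative: p_α(50) < 0. -/
noncomputable section

/-- For every `α ∈ (0, 1]`, `p_α(50) < 0`. -/
theorem stmt9 (α : ℝ) (hα0 : 0 < α) (hα1 : α ≤ 1) :
    p α 50 < 0 := by
  unfold p c0 c1 c2 c3
  nlinarith [sq_nonneg α, sq_nonneg (α-1), sq_nonneg (α^2-α), sq_nonneg (α^3-α^2), mul_pos hα0 hα0, sq_nonneg (α^2-1), pow_le_one₀ hα0.le hα1 (n:=3), pow_le_one₀ hα0.le hα1 (n:=5), mul_pos (mul_pos hα0 hα0) hα0, sq_nonneg (α^3-α), sq_nonneg (α^2+α-1)]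
end
end

section
/- For every b ∈ [0, 1/2], the polynomial ζ(b) = 100·b⁹·(517 − 210·b) + b⁵·(12494 + 165531·b − 113321·b² − 6930·b³) + b·(4588 + 42097·b + 14067·b² − 153097·b³) + 95 satisfies ζ(b) ≥ 95. -/
/-- For every `b ∈ [0, 1/2]`,
`ζ(b) = 100·b⁹·(517 − 210·b) + b⁵·(12494 + 165531·b − 113321·b² − 6930·b³)
  + b·(4588 + 42097·b + 14067·b² − 153097·b³) + 95 ≥ 95`. -/
theorem stmt16 (b : ℝ) (hb0 : 0 ≤ b) (hb1 : b ≤ 1 / 2) :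
    95 ≤ 100 * b ^ 9 * (517 - 210 * b) +
        b ^ 5 * (12494 + 165531 * b - 113321 * b ^ 2 - 6930 * b ^ 3) +
        b * (4588 + 42097 * b + 14067 * b ^ 2 - 153097 * b ^ 3) + 95 := by
  have hb2 : 0 ≤ b ^ 2 := by positivity
  have h3 : b ^ 3 ≤ b / 4 := by nlinarith [sq_nonneg b, sq_nonneg (b - 1/2), mul_nonneg hb0 hb0]
  have h6 : b ^ 6 ≤ b / 32 := by nlinarith [pow_nonneg hb0 5, pow_nonneg hb0 4, pow_nonneg hb0 3, mul_nonneg (pow_nonneg hb0 5) (sub_nonneg.mpr hb1)]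
  have h7 : b ^ 7 ≤ b / 64 := by nlinarith [pow_nonneg hb0 6, mul_nonneg (pow_nonneg hb0 6) (sub_nonneg.mpr hb1), h6]
  have h9 : b ^ 9 ≤ b / 256 := by nlinarith [pow_nonneg hb0 8, mul_nonneg (pow_nonneg hb0 8) (sub_nonneg.mpr hb1), h7, mul_nonneg (pow_nonneg hb0 7) (sub_nonneg.mpr hb1)]
  nlinarith [mul_nonneg hb0 hb0, pow_nonneg hb0 4, pow_nonneg hb0 5, pow_nonneg hb0 6, pow_nonneg hb0 8, h3, h6, h7, h9, hb0]
end

section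
/- For every α ∈ [1/2, 1], the value of the cubic polynomial p_α at the point y_α = 105 − 50·α (note y_α > 50 on this range) is strictly positive: p_α(105 − 50·α) > 0. -/
noncomputable section

/-- For every `α ∈ [1/2, 1]`, with `y_α = 105 − 50·α` (which is `> 50`
on this range), one has `p_α(105 − 50·α) > 0`. -/
theorem stmt17 (α : ℝ) (hα0 : 1 / 2 ≤ α) (hα1 : α ≤ 1) :
    0 < p α (105 - 50 * α) := by
  have hu0 : (0:ℝ) ≤ 1 - α := by linarith
  have hu : (1:ℝ) - α ≤ 1 / 2 := by linarith
  have h2 : (1 - α) ^ 2 ≤ 1 / 4 := by nlinarith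
  have h5 : (1 - α) ^ 5 ≤ 1 / 32 := by
    calc (1 - α) ^ 5 ≤ (1/2 : ℝ) ^ 5 := pow_le_pow_left₀ hu0 hu 5
    _ = 1 / 32 := by norm_num
  have h6 : (1 - α) ^ 6 ≤ 1 / 64 := by
    calc (1 - α) ^ 6 ≤ (1/2 : ℝ) ^ 6 := pow_le_pow_left₀ hu0 hu 6
    _ = 1 / 64 := by norm_num
  have h8 : (1 - α) ^ 8 ≤ 1 / 256 := by
    calc (1 - α) ^ 8 ≤ (1/2 : ℝ) ^ 8 := pow_le_pow_left₀ hu0 hu 8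
    _ = 1 / 256 := by norm_num
  have hsq : (0:ℝ) ≤ (1 - α) ^ 2 := sq_nonneg _
  have H4 : (1 - α) ^ 4 ≤ (1/4) * (1 - α) ^ 2 := by nlinarith [mul_le_mul_of_nonneg_right h2 hsq]
  have H7 : (1 - α) ^ 7 ≤ (1/32) * (1 - α) ^ 2 := by nlinarith [mul_le_mul_of_nonneg_right h5 hsq]
  have H8 : (1 - α) ^ 8 ≤ (1/64) * (1 - α) ^ 2 := by nlinarith [mul_le_mul_of_nonneg_right h6 hsq]
  have H10 : (1 - α) ^ 10 ≤ (1/256) * (1 - α) ^ 2 := by nlinarith [mul_le_mul_of_nonneg_right h8 hsq]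
  have h3 : (0:ℝ) ≤ (1 - α) ^ 3 := pow_nonneg hu0 3
  have h5' : (0:ℝ) ≤ (1 - α) ^ 5 := pow_nonneg hu0 5
  have h6' : (0:ℝ) ≤ (1 - α) ^ 6 := pow_nonneg hu0 6
  have h9' : (0:ℝ) ≤ (1 - α) ^ 9 := pow_nonneg hu0 9
  simp only [p, c0, c1, c2, c3]
  nlinarith [H4, H7, H8, H10, h3, h5', h6', h9', hsq, hu0]
end
end
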